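/- The logarithmic potential of μ̄_p^α satisfies the strict inequalities: U_{μ̄_p^α}(z) < |z|²/(2α) + (log α - 1)/2 + c₁ for √p < |z| < 1, and U_{μ̄_p^α}(z) < |z|²/(2α) + (log α - 1)/2 for |z| > √α, where c₁ = (p(log p - 1) + 1)/(2α). -/

import Mathlib

open MeasureTheory Real

/-- The uniform probability measure on the unit circle in `ℂ`. -/
noncomputable def mT : Measure ℂ :=
  (ENNReal.ofReal (2 * π))⁻¹ •
    Measure.map (fun θ : ℝ => Complex.exp (θ * Complex.I))
      (volume.restrict (Set.Ioc 0 (2 * π)))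

/-- The closed annulus `{z : a ≤ |z| ≤ b}` in `ℂ`. -/
def annulus (a b : ℝ) : Set ℂ := {z | a ≤ ‖z‖ ∧ ‖z‖ ≤ b}

/-- The measure `μ̄_p^α = (1/α)[𝟙_{|z| ≤ √p} + 𝟙_{1 ≤ |z| ≤ √α}] dm/π + ((1-p)/α) m_T`. -/
noncomputable def muBar (α p : ℝ) : Measure ℂ :=
  ENNReal.ofReal (1 / (α * π)) •
      volume.restrict (Metric.closedBall (0 : ℂ) (Real.sqrt p) ∪ annulus 1 (Real.sqrt α))
    + ENNReal.ofReal ((1 - p) / α) • mT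

/-- The logarithmic potential of a measure on `ℂ`. -/
noncomputable def logPot (μ : Measure ℂ) (z : ℂ) : ℝ :=
  ∫ w, Real.log (‖z - w‖) ∂μ

/-! ### Auxiliary lemmas -/


lemma cont_log_abs {g : ℝ → ℂ} (hg : Continuous g) (hne : ∀ θ, g θ ≠ 0) :
    Continuous fun θ => Real.log (‖g θ‖) := by
  rw [continuous_iff_continuousAt]; intro θ
  exact (Real.continuousAt_log (by simpa using hne θ)).comp
    ((continuous_norm.comp hg).continuousAt)

/-- Mean value property for `log |1 - w e^{iθ}|`, `|w| < 1`. -/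
lemma meanZero {w : ℂ} (hw : ‖w‖ < 1) :
    ∫ θ in (0:ℝ)..(2*π), Real.log (‖1 - w * Complex.exp (θ * Complex.I)‖) = 0 := by
  have hslit : ∀ ζ : ℂ, ‖ζ‖ ≤ 1 → (1 - w * ζ) ∈ Complex.slitPlane := by
    intro ζ hζ
    left
    have h1 : ‖w * ζ‖ < 1 := by
      rw [norm_mul]
      calc ‖w‖ * ‖ζ‖ ≤ ‖w‖ * 1 :=
            mul_le_mul_of_nonneg_left hζ (norm_nonneg w)
        _ < 1 := by simpa using hw
    have hre : (w*ζ).re < 1 := lt_of_le_of_lt (Complex.re_le_norm _) h1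
    simp only [Complex.sub_re, Complex.one_re, Complex.mul_re]
    have : (w*ζ).re = w.re * ζ.re - w.im * ζ.im := Complex.mul_re w ζ
    linarith [hre]
  set f : ℂ → ℂ := fun ζ => Complex.log (1 - w * ζ) with hf
  have hdiff : DifferentiableOn ℂ f (Metric.closedBall 0 1) := by
    intro ζ hζ
    have : DifferentiableAt ℂ f ζ := by
      apply DifferentiableAt.clog (by fun_prop)
      exact hslit ζ (by simpa [Complex.dist_eq] using hζ)
    exact this.differentiableWithinAt
  have hD : DiffContOnCl ℂ f (Metric.ball 0 1) := by
    apply DifferentiableOn.diffContOnCl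
    rwa [closure_ball (0:ℂ) one_ne_zero]
  have hC := hD.circleIntegral_sub_inv_smul (Metric.mem_ball_self one_pos)
  have hf0 : f 0 = 0 := by simp [hf]
  rw [hf0, smul_zero, circleIntegral] at hC
  simp only [sub_zero, deriv_circleMap, circleMap_zero, Complex.ofReal_one, one_mul,
    smul_eq_mul] at hC
  have key : ∀ θ : ℝ, (Complex.exp (θ*Complex.I) * Complex.I) *
      ((Complex.exp (θ*Complex.I))⁻¹ * f (Complex.exp (θ*Complex.I)))
      = Complex.I * f (Complex.exp (θ*Complex.I)) := by
    intro θ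
    field_simp [Complex.exp_ne_zero]
  simp only [key] at hC
  rw [intervalIntegral.integral_const_mul] at hC
  have hint : ∫ θ in (0:ℝ)..(2*π), f (Complex.exp (θ*Complex.I)) = 0 := by
    rcases mul_eq_zero.mp hC with h|h
    · exact absurd h Complex.I_ne_zero
    · exact h
  have hcont : Continuous fun θ : ℝ => f (Complex.exp (θ*Complex.I)) := by
    rw [continuous_iff_continuousAt]
    intro θ
    apply ContinuousAt.clog (by fun_prop)
    exact hslit _ (le_of_eq (Complex.norm_exp_ofReal_mul_I θ))
  have hII : IntervalIntegrable (fun θ : ℝ => f (Complex.exp (θ*Complex.I))) volume 0 (2*π) :=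
    hcont.intervalIntegrable _ _
  have hre := Complex.reCLM.intervalIntegral_comp_comm hII
  rw [hint] at hre
  simp only [Complex.reCLM_apply, Complex.zero_re] at hre
  have heq : (∫ θ in (0:ℝ)..(2*π), Real.log (‖1 - w * Complex.exp (θ * Complex.I)‖))
      = ∫ θ in (0:ℝ)..(2*π), (f (Complex.exp (θ*Complex.I))).re := by
    apply intervalIntegral.integral_congr
    intro θ _
    simp only [hf]
    rw [Complex.log_re]
  rw [heq, hre]

lemma one_sub_ne {w : ℂ} (hw : ‖w‖ < 1) (θ : ℝ) :
    1 - w * Complex.exp (θ * Complex.I) ≠ 0 := by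
  intro h
  have h1 : (1:ℂ) = w * Complex.exp (θ * Complex.I) := by linear_combination h
  have := congrArg norm h1
  rw [norm_one, norm_mul, Complex.norm_exp_ofReal_mul_I, mul_one] at this
  linarith [this, hw]

/-- Circle average when `z` is outside the circle of radius `r`. -/
lemma circAvg_out {r : ℝ} (hr : 0 ≤ r) {z : ℂ} (h : r < ‖z‖) :
    ∫ θ in (0:ℝ)..(2*π), Real.log (‖z - r * Complex.exp (θ * Complex.I)‖)
      = 2*π * Real.log (‖z‖) := by
  have hz0 : z ≠ 0 := by
    intro hz; rw [hz] at h; simp at h; linarith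
  have habs : ‖z‖ ≠ 0 := by simpa using hz0
  have hw : ‖(r:ℂ)/z‖ < 1 := by
    rw [norm_div, Complex.norm_of_nonneg hr,
      div_lt_one (lt_of_le_of_lt hr h)]
    exact h
  have key : ∀ θ:ℝ, Real.log (‖z - r * Complex.exp (θ*Complex.I)‖) =
      Real.log (‖z‖)
        + Real.log (‖1 - ((r:ℂ)/z) * Complex.exp (θ*Complex.I)‖) := by
    intro θ
    rw [← Real.log_mul habs (norm_ne_zero_iff.mpr (one_sub_ne hw θ)), ← norm_mul]
    congr 2
    field_simp
  rw [intervalIntegral.integral_congr (g := fun θ:ℝ => Real.log (‖z‖)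
        + Real.log (‖1 - ((r:ℂ)/z) * Complex.exp (θ*Complex.I)‖))
      (fun θ _ => key θ)]
  rw [intervalIntegral.integral_add (intervalIntegrable_const)
      ((cont_log_abs (by fun_prop) (one_sub_ne hw)).intervalIntegrable _ _)]
  rw [meanZero hw, intervalIntegral.integral_const]
  simp only [sub_zero, smul_eq_mul, add_zero]

/-- Circle average when `z` is inside the circle of radius `r`. -/
lemma circAvg_in {r : ℝ} {z : ℂ} (h : ‖z‖ < r) :
    ∫ θ in (0:ℝ)..(2*π), Real.log (‖z - r * Complex.exp (θ * Complex.I)‖)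
      = 2*π * Real.log r := by
  have hr0 : 0 < r := lt_of_le_of_lt (norm_nonneg z) h
  have hrC : (r:ℂ) ≠ 0 := by exact_mod_cast hr0.ne'
  have hw : ‖(starRingEnd ℂ) (z/(r:ℂ))‖ < 1 := by
    rw [Complex.norm_conj, norm_div, Complex.norm_of_nonneg hr0.le,
      div_lt_one hr0]
    exact h
  have key : ∀ θ:ℝ, Real.log (‖z - r * Complex.exp (θ*Complex.I)‖) =
      Real.log r
        + Real.log (‖1 - (starRingEnd ℂ) (z/(r:ℂ)) * Complex.exp (θ*Complex.I)‖) := by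
    intro θ
    have hE : Complex.exp (θ*Complex.I) ≠ 0 := Complex.exp_ne_zero _
    have hconjE : (starRingEnd ℂ) (Complex.exp (θ*Complex.I))
        = (Complex.exp (θ*Complex.I))⁻¹ := by
      rw [← Complex.exp_conj, ← Complex.exp_neg]
      congr 1
      simp [map_mul, Complex.conj_ofReal, Complex.conj_I]
    have factor : z - r * Complex.exp (θ*Complex.I)
        = (-(r:ℂ) * Complex.exp (θ*Complex.I))
          * (starRingEnd ℂ) (1 - (starRingEnd ℂ) (z/(r:ℂ)) * Complex.exp (θ*Complex.I)) := by
      rw [map_sub, map_one, map_mul, Complex.conj_conj, hconjE]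
      field_simp
      ring
    rw [factor, norm_mul, norm_mul, Complex.norm_conj, norm_neg,
      Complex.norm_of_nonneg hr0.le, Complex.norm_exp_ofReal_mul_I, mul_one,
      Real.log_mul hr0.ne' (norm_ne_zero_iff.mpr (one_sub_ne hw θ))]
  rw [intervalIntegral.integral_congr (g := fun θ:ℝ => Real.log r
        + Real.log (‖1 - (starRingEnd ℂ) (z/(r:ℂ)) * Complex.exp (θ*Complex.I)‖))
      (fun θ _ => key θ)]
  rw [intervalIntegral.integral_add (intervalIntegrable_const)
      ((cont_log_abs (by fun_prop) (one_sub_ne hw)).intervalIntegrable _ _)]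
  rw [meanZero hw, intervalIntegral.integral_const]
  simp only [sub_zero, smul_eq_mul, add_zero]

lemma isClosed_annulus (a b : ℝ) : IsClosed (annulus a b) := by
  have : annulus a b = (fun z : ℂ => ‖z‖) ⁻¹' (Set.Icc a b) := rfl
  rw [this]
  exact isClosed_Icc.preimage continuous_norm

lemma polarTarget : (polarCoord.target : Set (ℝ × ℝ)) = Set.Ioi 0 ×ˢ Set.Ioo (-π) π := rfl

lemma polarSymm (p : ℝ × ℝ) :
    Complex.polarCoord.symm p = p.1 * Complex.exp (p.2 * Complex.I) := by
  rw [Complex.polarCoord_symm_apply, Complex.exp_mul_I, Complex.ofReal_cos, Complex.ofReal_sin]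

lemma abs_mul_exp (r θ : ℝ) (hr : 0 ≤ r) :
    ‖(r:ℂ) * Complex.exp (θ * Complex.I)‖ = r := by
  rw [norm_mul, Complex.norm_of_nonneg hr, Complex.norm_exp_ofReal_mul_I, mul_one]

lemma periodic_logabs (z : ℂ) (r : ℝ) :
    Function.Periodic
      (fun θ : ℝ => Real.log (‖z - r * Complex.exp (θ * Complex.I)‖)) (2*π) := by
  intro θ
  have : Complex.exp ((↑(θ + 2*π)) * Complex.I) = Complex.exp (θ * Complex.I) := by
    push_cast
    rw [add_mul, Complex.exp_add, Complex.exp_two_pi_mul_I, mul_one]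
  simp only [this]

/-- Polar-coordinates reduction of the annulus integral to a radial integral. -/
lemma annulus_polar {a b : ℝ} (h0 : 0 ≤ a) (hab : a ≤ b) {z : ℂ}
    (hz : ‖z‖ ∉ Set.Icc a b) :
    ∫ w in annulus a b, Real.log (‖z - w‖) =
      ∫ r in a..b, r * ∫ θ in (0:ℝ)..(2*π),
        Real.log (‖z - r * Complex.exp (θ * Complex.I)‖) := by
  set F : ℂ → ℝ := (annulus a b).indicator (fun w => Real.log (‖z - w‖)) with hF
  have hmeas : MeasurableSet (annulus a b) := (isClosed_annulus a b).measurableSet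
  have h1 : (∫ p in polarCoord.target, p.1 • F (Complex.polarCoord.symm p)) = ∫ w, F w :=
    Complex.integral_comp_polarCoord_symm F
  rw [integral_indicator hmeas] at h1
  set g : ℝ × ℝ → ℝ :=
    fun p => p.1 * Real.log (‖z - p.1 * Complex.exp (p.2 * Complex.I)‖) with hg
  set S : Set ℝ := Set.Ioi 0 ∩ Set.Icc a b with hS
  have hSm : MeasurableSet S := measurableSet_Ioi.inter measurableSet_Icc
  have h2 : Set.EqOn (fun p : ℝ × ℝ => p.1 • F (Complex.polarCoord.symm p))
      ((S ×ˢ (Set.univ : Set ℝ)).indicator g) polarCoord.target := by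
    rintro ⟨r, θ⟩ hp
    rw [polarTarget] at hp
    obtain ⟨hr, hθ⟩ := hp
    simp only [Set.mem_Ioi] at hr
    have habs : ‖(r:ℝ) * Complex.exp (θ * Complex.I)‖ = r := abs_mul_exp r θ hr.le
    by_cases hmem : a ≤ r ∧ r ≤ b
    · have hin : Complex.polarCoord.symm (r, θ) ∈ annulus a b := by
        rw [polarSymm]
        exact ⟨by rw [habs]; exact hmem.1, by rw [habs]; exact hmem.2⟩
      have hin' : ((r,θ) : ℝ × ℝ) ∈ S ×ˢ (Set.univ : Set ℝ) :=
        ⟨⟨hr, hmem⟩, Set.mem_univ _⟩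
      simp only [hF, Set.indicator_of_mem hin, Set.indicator_of_mem hin', hg, smul_eq_mul]
      rw [polarSymm]
    · have hout : Complex.polarCoord.symm (r, θ) ∉ annulus a b := by
        rw [polarSymm]
        intro hcon
        rw [show ((r,θ):ℝ×ℝ).1 = r from rfl] at hcon
        exact hmem ⟨by simpa [habs, abs_of_pos hr] using hcon.1, by simpa [habs, abs_of_pos hr] using hcon.2⟩
      have hout' : ((r,θ) : ℝ × ℝ) ∉ S ×ˢ (Set.univ : Set ℝ) := by
        intro hcon
        exact hmem hcon.1.2
      simp only [hF, Set.indicator_of_notMem hout, Set.indicator_of_notMem hout',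
        smul_zero]
  rw [setIntegral_congr_fun polarCoord.open_target.measurableSet h2] at h1
  rw [setIntegral_indicator (hSm.prod MeasurableSet.univ)] at h1
  have hset : polarCoord.target ∩ (S ×ˢ (Set.univ : Set ℝ)) = S ×ˢ Set.Ioo (-π) π := by
    rw [polarTarget, Set.prod_inter_prod, Set.inter_univ,
      Set.inter_eq_self_of_subset_right Set.inter_subset_left]
  rw [hset] at h1
  have hKne : ∀ p ∈ (Set.Icc a b ×ˢ Set.Icc (-π) π : Set (ℝ×ℝ)),
      z - p.1 * Complex.exp (p.2 * Complex.I) ≠ 0 := by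
    rintro ⟨r, θ⟩ ⟨hr, -⟩ hcon
    have : z = r * Complex.exp (θ * Complex.I) := by linear_combination hcon
    apply hz
    rw [this, abs_mul_exp r θ (le_trans h0 hr.1)]
    exact hr
  have hKcont : ContinuousOn g (Set.Icc a b ×ˢ Set.Icc (-π) π) := by
    apply ContinuousOn.mul continuousOn_fst
    apply ContinuousOn.log
    · exact (continuous_norm.comp (by fun_prop)).continuousOn
    · intro p hp
      have := hKne p hp
      intro hcon
      rw [show ‖z - ↑p.1 * Complex.exp (↑p.2 * Complex.I)‖ = 0 ↔
        z - ↑p.1 * Complex.exp (↑p.2 * Complex.I) = 0 from norm_eq_zero] at hcon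
      exact this hcon
  have hIntK : IntegrableOn g (Set.Icc a b ×ˢ Set.Icc (-π) π) volume :=
    hKcont.integrableOn_compact (isCompact_Icc.prod isCompact_Icc)
  have hInt : IntegrableOn g (S ×ˢ Set.Ioo (-π) π) volume := by
    apply hIntK.mono_set
    exact Set.prod_mono Set.inter_subset_right Set.Ioo_subset_Icc_self
  rw [Measure.volume_eq_prod] at hInt
  rw [show (volume : Measure (ℝ×ℝ)) = volume.prod volume from Measure.volume_eq_prod ℝ ℝ] at h1
  rw [setIntegral_prod g hInt] at h1
  have inner : ∀ r : ℝ, (∫ θ in Set.Ioo (-π) π, g (r, θ))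
      = r * ∫ θ in (0:ℝ)..(2*π),
        Real.log (‖z - r * Complex.exp (θ * Complex.I)‖) := by
    intro r
    have e1 : (∫ θ in Set.Ioo (-π) π, g (r, θ))
        = r * ∫ θ in Set.Ioo (-π) π,
            Real.log (‖z - r * Complex.exp (θ * Complex.I)‖) := by
      rw [hg]
      exact integral_const_mul r _
    rw [e1, ← integral_Ioc_eq_integral_Ioo,
      ← intervalIntegral.integral_of_le (by linarith [Real.pi_pos] : (-π) ≤ π)]
    congr 1
    have := (periodic_logabs z r).intervalIntegral_add_eq (-π) 0
    rw [show -π + 2*π = π by ring, show (0:ℝ) + 2*π = 2*π by ring] at this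
    exact this
  have houter : (∫ r in S, ∫ θ in Set.Ioo (-π) π, g (r, θ))
      = ∫ r in Set.Ioc a b, ∫ θ in Set.Ioo (-π) π, g (r, θ) := by
    rcases eq_or_lt_of_le h0 with h|h
    · have hSe : S = Set.Ioc a b := by
        rw [hS, ← h]
        ext r
        constructor
        · rintro ⟨h1', h2'⟩; exact ⟨h1', h2'.2⟩
        · rintro ⟨h1', h2'⟩; exact ⟨h1', le_of_lt h1', h2'⟩
      rw [hSe]
    · have : S = Set.Icc a b := by
        rw [hS]
        apply Set.inter_eq_self_of_subset_right
        intro r hr'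
        exact lt_of_lt_of_le h hr'.1
      rw [this, integral_Icc_eq_integral_Ioc]
  rw [houter] at h1
  rw [← h1, ← intervalIntegral.integral_of_le hab]
  apply intervalIntegral.integral_congr
  intro r _
  exact inner r

/-- Annulus integral when `z` is outside. -/
lemma annulus_out {a b : ℝ} (h0 : 0 ≤ a) (hab : a ≤ b) {z : ℂ}
    (hz : b < ‖z‖) :
    ∫ w in annulus a b, Real.log (‖z - w‖)
      = π * (b^2 - a^2) * Real.log (‖z‖) := by
  rw [annulus_polar h0 hab (by intro hc; exact absurd hc.2 (not_le.mpr hz))]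
  rw [intervalIntegral.integral_congr
      (g := fun r : ℝ => (2*π*Real.log (‖z‖)) * r)
      (fun r hr => by
        rw [Set.uIcc_of_le hab] at hr
        rw [circAvg_out (le_trans h0 hr.1) (lt_of_le_of_lt hr.2 hz)]
        ring)]
  rw [intervalIntegral.integral_const_mul, integral_id]
  ring

/-- Annulus integral when `z` is in the hole. -/
lemma annulus_in {a b : ℝ} (h0 : 0 < a) (hab : a ≤ b) {z : ℂ}
    (hz : ‖z‖ < a) :
    ∫ w in annulus a b, Real.log (‖z - w‖)
      = 2*π * ((b^2/2 * Real.log b - b^2/4) - (a^2/2 * Real.log a - a^2/4)) := by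
  rw [annulus_polar h0.le hab (by intro hc; exact absurd hc.1 (not_le.mpr hz))]
  rw [intervalIntegral.integral_congr
      (g := fun r : ℝ => (2*π) * (r * Real.log r))
      (fun r hr => by
        rw [Set.uIcc_of_le hab] at hr
        rw [circAvg_in (lt_of_lt_of_le hz hr.1)]
        ring)]
  rw [intervalIntegral.integral_const_mul]
  have hftc : ∫ r in a..b, r * Real.log r
      = (b^2/2 * Real.log b - b^2/4) - (a^2/2 * Real.log a - a^2/4) := by
    apply intervalIntegral.integral_eq_sub_of_hasDerivAt
    · intro x hx
      rw [Set.uIcc_of_le hab] at hx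
      have hx0 : 0 < x := lt_of_lt_of_le h0 hx.1
      have h1 : HasDerivAt (fun y : ℝ => y^2/2 * Real.log y)
          (x * Real.log x + x/2) x := by
        have := ((hasDerivAt_pow 2 x).div_const 2).mul (Real.hasDerivAt_log hx0.ne')
        refine this.congr_deriv ?_
        field_simp
        ring
      have h2 : HasDerivAt (fun y : ℝ => y^2/4) (x/2) x := by
        have := (hasDerivAt_pow 2 x).div_const 4
        refine this.congr_deriv ?_
        ring
      have := h1.sub h2
      refine this.congr_deriv ?_
      ring
    · apply ContinuousOn.intervalIntegrable
      rw [Set.uIcc_of_le hab]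
      apply ContinuousOn.mul continuousOn_id
      apply ContinuousOn.log continuousOn_id
      intro x hx
      exact ne_of_gt (lt_of_lt_of_le h0 hx.1)
  rw [hftc]

/-- Integral over the circle measure. -/
lemma mT_int {z : ℂ} (hz : ‖z‖ ≠ 1) :
    ∫ w, Real.log (‖z - w‖) ∂mT
      = Real.log (max (‖z‖) 1) := by
  rw [mT, integral_smul_measure]
  have hmap : ∫ w, Real.log (‖z - w‖)
      ∂(Measure.map (fun θ : ℝ => Complex.exp (θ * Complex.I))
        (volume.restrict (Set.Ioc 0 (2 * π))))
      = ∫ θ in Set.Ioc 0 (2*π), Real.log (‖z - Complex.exp (θ * Complex.I)‖) := by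
    rw [integral_map]
    · exact (Complex.continuous_exp.comp (by fun_prop)).aemeasurable
    · exact (Real.measurable_log.comp
        (continuous_norm.measurable.comp
          (measurable_const.sub measurable_id))).aestronglyMeasurable
  rw [hmap, ← intervalIntegral.integral_of_le (by positivity : (0:ℝ) ≤ 2*π)]
  have hone : ∀ θ : ℝ, (z - Complex.exp (θ * Complex.I))
      = z - (1:ℝ) * Complex.exp (θ * Complex.I) := by
    intro θ; push_cast; ring
  rw [intervalIntegral.integral_congr (g := fun θ : ℝ =>
      Real.log (‖z - (1:ℝ) * Complex.exp (θ * Complex.I)‖))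
      (fun θ _ => by rw [hone θ])]
  rcases lt_or_gt_of_ne hz with h|h
  · rw [circAvg_in (by simpa using h)]
    rw [max_eq_right h.le]
    simp [Real.log_one]
  · rw [circAvg_out zero_le_one (by simpa using h)]
    rw [max_eq_left h.le]
    have hput : ((ENNReal.ofReal (2 * π))⁻¹).toReal = (2*π)⁻¹ := by
      rw [ENNReal.toReal_inv, ENNReal.toReal_ofReal (by positivity)]
    rw [hput, smul_eq_mul]
    field_simp

lemma closedBall_eq_annulus (s : ℝ) :
    Metric.closedBall (0 : ℂ) s = annulus 0 s := by
  ext w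
  simp [annulus, Complex.dist_eq, norm_nonneg]

lemma isCompact_annulus (a b : ℝ) : IsCompact (annulus a b) := by
  apply Metric.isCompact_of_isClosed_isBounded (isClosed_annulus a b)
  apply (Metric.isBounded_closedBall (x := (0:ℂ)) (r := b)).subset
  intro w hw
  simp only [Metric.mem_closedBall, Complex.dist_eq, sub_zero]
  exact hw.2

lemma contOn_logabs {z : ℂ} {U : Set ℂ} (hzU : ∀ w ∈ U, z - w ≠ 0) :
    ContinuousOn (fun w => Real.log (‖z - w‖)) U := by
  apply ContinuousOn.log
  · exact (continuous_norm.comp (continuous_const.sub continuous_id)).continuousOn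
  · intro w hw hcon
    exact hzU w hw (norm_eq_zero.mp hcon)

lemma integrable_mT {z : ℂ} (hz : ‖z‖ ≠ 1) :
    Integrable (fun w => Real.log (‖z - w‖)) mT := by
  rw [mT]
  apply Integrable.smul_measure
  swap
  · exact ENNReal.inv_ne_top.mpr (by positivity)
  have hmg : Measurable fun w : ℂ => Real.log (‖z - w‖) :=
    Real.measurable_log.comp
      (continuous_norm.measurable.comp (measurable_const.sub measurable_id))
  have hφ : AEMeasurable (fun θ : ℝ => Complex.exp (θ * Complex.I))
      (volume.restrict (Set.Ioc 0 (2 * π))) := by fun_prop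
  rw [integrable_map_measure (g := fun w : ℂ => Real.log (‖z - w‖))
      hmg.aestronglyMeasurable hφ]
  have hcont : Continuous fun θ : ℝ => Real.log (‖z - Complex.exp (θ*Complex.I)‖) := by
    apply cont_log_abs (by fun_prop)
    intro θ hcon
    apply hz
    have : z = Complex.exp (θ*Complex.I) := by linear_combination hcon
    rw [this, Complex.norm_exp_ofReal_mul_I]
  exact hcont.integrableOn_Ioc

/-- Strict inequalities for the logarithmic potential of `μ̄_p^α` off its support:
`U(z) < |z|²/(2α) + (log α - 1)/2 + c₁` for `√p < |z| < 1`, and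
`U(z) < |z|²/(2α) + (log α - 1)/2` for `|z| > √α`, where `c₁ = (p(log p - 1)+1)/(2α)`. -/
theorem logPot_muBar_strict (α p : ℝ) (hα : 1 ≤ α) (hp : p ∈ Set.Ioo (0 : ℝ) 1) :
    (∀ z : ℂ, Real.sqrt p < ‖z‖ → ‖z‖ < 1 →
      logPot (muBar α p) z < ‖z‖ ^ 2 / (2 * α) + (Real.log α - 1) / 2 +
        (p * (Real.log p - 1) + 1) / (2 * α)) ∧
    (∀ z : ℂ, Real.sqrt α < ‖z‖ →
      logPot (muBar α p) z < ‖z‖ ^ 2 / (2 * α) + (Real.log α - 1) / 2) := by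
  obtain ⟨hp0, hp1⟩ := hp
  have hα0 : 0 < α := lt_of_lt_of_le one_pos hα
  have hπ := Real.pi_pos
  have hsp2 : Real.sqrt p ^ 2 = p := Real.sq_sqrt hp0.le
  have hsa2 : Real.sqrt α ^ 2 = α := Real.sq_sqrt (by linarith)
  have hsa1 : 1 ≤ Real.sqrt α := by
    rw [show (1:ℝ) = Real.sqrt 1 by simp]
    exact Real.sqrt_le_sqrt hα
  have hsp1 : Real.sqrt p < 1 := by
    rw [show (1:ℝ) = Real.sqrt 1 by simp]
    exact Real.sqrt_lt_sqrt hp0.le hp1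
  -- generic decomposition of the potential
  have split : ∀ z : ℂ, ‖z‖ ≠ 1 →
      (∀ w ∈ (Metric.closedBall (0:ℂ) (Real.sqrt p) ∪ annulus 1 (Real.sqrt α)), z - w ≠ 0) →
      logPot (muBar α p) z =
        (1/(α*π)) * ((∫ w in Metric.closedBall (0:ℂ) (Real.sqrt p),
            Real.log (‖z - w‖))
          + ∫ w in annulus 1 (Real.sqrt α), Real.log (‖z - w‖))
        + ((1-p)/α) * Real.log (max (‖z‖) 1) := by
    intro z hz1 hzU
    have hUc : IsCompact (Metric.closedBall (0:ℂ) (Real.sqrt p) ∪ annulus 1 (Real.sqrt α)) :=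
      (isCompact_closedBall _ _).union (isCompact_annulus 1 _)
    have hIntU : IntegrableOn (fun w => Real.log (‖z - w‖))
        (Metric.closedBall (0:ℂ) (Real.sqrt p) ∪ annulus 1 (Real.sqrt α)) volume :=
      (contOn_logabs hzU).integrableOn_compact hUc
    have hIntB := hIntU.mono_set (Set.subset_union_left)
    have hIntA := hIntU.mono_set (Set.subset_union_right)
    have hdisj : Disjoint (Metric.closedBall (0:ℂ) (Real.sqrt p)) (annulus 1 (Real.sqrt α)) := by
      rw [Set.disjoint_left]
      intro w hw hw2
      have h1 : ‖w‖ ≤ Real.sqrt p := by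
        simpa [Complex.dist_eq] using hw
      have h2 : 1 ≤ ‖w‖ := hw2.1
      linarith [hsp1]
    rw [logPot, muBar]
    rw [integral_add_measure (hIntU.smul_measure ENNReal.ofReal_ne_top)
      ((integrable_mT hz1).smul_measure ENNReal.ofReal_ne_top)]
    rw [integral_smul_measure, integral_smul_measure]
    rw [ENNReal.toReal_ofReal (by positivity),
      ENNReal.toReal_ofReal (div_nonneg (by linarith) hα0.le)]
    rw [setIntegral_union hdisj (isClosed_annulus 1 _).measurableSet hIntB hIntA,
      mT_int hz1]
    simp only [smul_eq_mul]
  constructor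
  · -- Case √p < |z| < 1
    intro z h1 h2
    have ht0 : 0 < ‖z‖ := lt_of_le_of_lt (Real.sqrt_nonneg p) h1
    have hzne : ‖z‖ ≠ 1 := ne_of_lt h2
    have hzU : ∀ w ∈ (Metric.closedBall (0:ℂ) (Real.sqrt p) ∪ annulus 1 (Real.sqrt α)),
        z - w ≠ 0 := by
      intro w hw hcon
      have hzw : z = w := by linear_combination hcon
      rcases hw with hw|hw
      · have : ‖w‖ ≤ Real.sqrt p := by simpa [Complex.dist_eq] using hw
        rw [← hzw] at this
        linarith
      · have : 1 ≤ ‖w‖ := hw.1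
        rw [← hzw] at this
        linarith
    have hval : logPot (muBar α p) z
        = p * Real.log (‖z‖)/α + Real.log α/2 - 1/2 + 1/(2*α) := by
      rw [split z hzne hzU, closedBall_eq_annulus,
        annulus_out le_rfl (Real.sqrt_nonneg p) h1,
        annulus_in one_pos hsa1 h2,
        max_eq_right h2.le, hsp2, hsa2,
        Real.log_sqrt (by linarith), Real.log_one]
      field_simp
      ring
    rw [hval]
    -- key inequality
    have hs : p < ‖z‖^2 := by
      calc p = Real.sqrt p ^ 2 := hsp2.symm
        _ < ‖z‖^2 := by
            exact pow_lt_pow_left₀ h1 (Real.sqrt_nonneg p) two_ne_zero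
    have hne1 : (‖z‖)^2/p ≠ 1 := by
      intro hcon
      rw [div_eq_one_iff_eq hp0.ne'] at hcon
      exact (ne_of_gt hs) hcon
    have hlog := Real.log_lt_sub_one_of_pos (x := (‖z‖)^2/p)
      (div_pos (by positivity) hp0) hne1
    rw [Real.log_div (by positivity) hp0.ne'] at hlog
    have hlt : Real.log ((‖z‖)^2) = 2 * Real.log (‖z‖) := by
      rw [Real.log_pow]
      norm_num
    rw [hlt] at hlog
    have h2' := mul_lt_mul_of_pos_left hlog hp0
    have h3 : p * ((‖z‖)^2/p - 1) = (‖z‖)^2 - p := by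
      field_simp
    have key : 2*p*Real.log (‖z‖)
        < (‖z‖)^2 + p * Real.log p - p := by nlinarith [h2', h3]
    rw [← sub_pos]
    have hdiff : ‖z‖ ^ 2 / (2 * α) + (Real.log α - 1) / 2 +
          (p * (Real.log p - 1) + 1) / (2 * α)
        - (p * Real.log (‖z‖)/α + Real.log α/2 - 1/2 + 1/(2*α))
        = ((‖z‖)^2 + p * Real.log p - p - 2*p*Real.log (‖z‖))/(2*α) := by
      field_simp
      ring
    rw [hdiff]
    exact div_pos (by linarith [key]) (by linarith)
  · -- Case |z| > √α
    intro z h1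
    have ht1 : 1 < ‖z‖ := lt_of_le_of_lt hsa1 h1
    have hzne : ‖z‖ ≠ 1 := ne_of_gt ht1
    have hspt : Real.sqrt p < ‖z‖ := by linarith
    have hsat : Real.sqrt α < ‖z‖ := h1
    have hzU : ∀ w ∈ (Metric.closedBall (0:ℂ) (Real.sqrt p) ∪ annulus 1 (Real.sqrt α)),
        z - w ≠ 0 := by
      intro w hw hcon
      have hzw : z = w := by linear_combination hcon
      rcases hw with hw|hw
      · have : ‖w‖ ≤ Real.sqrt p := by simpa [Complex.dist_eq] using hw
        rw [← hzw] at this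
        linarith
      · have : ‖w‖ ≤ Real.sqrt α := hw.2
        rw [← hzw] at this
        linarith
    have hval : logPot (muBar α p) z = Real.log (‖z‖) := by
      rw [split z hzne hzU, closedBall_eq_annulus,
        annulus_out le_rfl (Real.sqrt_nonneg p) hspt,
        annulus_out zero_le_one hsa1 hsat,
        max_eq_left ht1.le, hsp2, hsa2]
      field_simp
      ring
    rw [hval]
    have hs : α < ‖z‖^2 := by
      calc α = Real.sqrt α ^ 2 := hsa2.symm
        _ < ‖z‖^2 := pow_lt_pow_left₀ h1 (Real.sqrt_nonneg α) two_ne_zero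
    have hne1 : (‖z‖)^2/α ≠ 1 := by
      intro hcon
      rw [div_eq_one_iff_eq hα0.ne'] at hcon
      exact (ne_of_gt hs) hcon
    have hlog := Real.log_lt_sub_one_of_pos (x := (‖z‖)^2/α)
      (div_pos (by positivity) hα0) hne1
    rw [Real.log_div (by positivity) hα0.ne'] at hlog
    have hlt : Real.log ((‖z‖)^2) = 2 * Real.log (‖z‖) := by
      rw [Real.log_pow]
      norm_num
    rw [hlt] at hlog
    have h2' := mul_lt_mul_of_pos_left hlog hα0
    have h3 : α * ((‖z‖)^2/α - 1) = (‖z‖)^2 - α := by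
      field_simp
    have key : 2*α*Real.log (‖z‖)
        < (‖z‖)^2 + α * Real.log α - α := by nlinarith [h2', h3]
    rw [← sub_pos]
    have hdiff : ‖z‖ ^ 2 / (2 * α) + (Real.log α - 1) / 2
        - Real.log (‖z‖)
        = ((‖z‖)^2 + α * Real.log α - α - 2*α*Real.log (‖z‖))/(2*α) := by
      field_simp
      ring
    rw [hdiff]
    exact div_pos (by linarith [key]) (by linarith)
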